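/- arXiv:2605.14687 — 4 statements merged into one kernel-verified Lean document; each statement's English description precedes it below -/
import Mathlib

section
/- Define sequences of polynomials A_j, B_j, C_j (in variables k_1,...,k_{j+1}) by A_1 = 1 + k_2 + k_1(k_2+2), B_1 = k_2+1, C_1 = k_2+2, and recurrences C_j = B_{j-1} + (k_{j+1}+1)C_{j-1}, B_j = B_{j-1} + k_{j+1} C_{j-1}, A_j = (A_{j-1} C_j - 1)/C_{j-1}. Then for all j ≥ 1, A_j C_{j-1} = A_{j-1} C_j - 1 holds with A_j a polynomial (i.e., C_{j-1} divides A_{j-1}C_j - 1 in the polynomial ring), where A_0 = 1 + k_1, B_0 = 1, C_0 = 1. -/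
open MvPolynomial

/-- `BC j = (B_j, C_j)` where `B_0 = C_0 = 1`,
`B_j = B_{j-1} + k_{j+1} C_{j-1}`, `C_j = B_{j-1} + (k_{j+1} + 1) C_{j-1}`,
with variable `k_i` represented by `MvPolynomial.X i`. -/
noncomputable def BCpoly : ℕ → MvPolynomial ℕ ℝ × MvPolynomial ℕ ℝ
  | 0 => (1, 1)
  | j + 1 =>
      ((BCpoly j).1 + X (j + 2) * (BCpoly j).2,
       (BCpoly j).1 + (X (j + 2) + 1) * (BCpoly j).2)

/-- The explicit sequence of polynomials `A_j`. -/
noncomputable def Apoly : ℕ → MvPolynomial ℕ ℝ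
  | 0 => 1 + X 1
  | 1 => 1 + X 2 + X 1 * (X 2 + 2)
  | j + 2 => (Apoly (j + 1) - Apoly j) + (X (j + 3) + 1) * Apoly (j + 1)

lemma Apoly_key : ∀ j : ℕ,
    Apoly (j + 1) * (BCpoly j).2 = Apoly j * (BCpoly (j + 1)).2 - 1 := by
  intro j
  induction j with
  | zero =>
      simp only [Apoly, BCpoly]
      ring
  | succ n ih =>
      simp only [Apoly, BCpoly] at ih ⊢
      linear_combination ih

/-- Well-definedness of the `A_j` polynomials: there is a sequence of genuine
polynomials `A_j` with `A_0 = 1 + k_1`, `A_1 = 1 + k_2 + k_1 (k_2 + 2)`, satisfying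
`A_j C_{j-1} = A_{j-1} C_j - 1` for all `j ≥ 1`, i.e. the division in the
recurrence `A_j = (A_{j-1} C_j - 1) / C_{j-1}` is exact in the polynomial ring. -/
theorem Apoly_well_defined :
    ∃ A : ℕ → MvPolynomial ℕ ℝ,
      A 0 = 1 + X 1 ∧
      A 1 = 1 + X 2 + X 1 * (X 2 + 2) ∧
      ∀ j : ℕ, 1 ≤ j → A j * (BCpoly (j - 1)).2 = A (j - 1) * (BCpoly j).2 - 1 := by
  refine ⟨Apoly, rfl, rfl, ?_⟩
  intro j hj
  obtain ⟨n, rfl⟩ := Nat.exists_eq_add_of_le hj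
  rw [Nat.add_comm 1 n]; simpa using Apoly_key n
end

section
/- With constant parameter k > 0, the sequence B_j defined by B_1 = k+1 and the coupled recurrence (B_j = B_{j-1} + k C_{j-1}, C_j = B_{j-1} + (k+1)C_{j-1}, C_1 = k+2) satisfies B_j = F_{2j+1}(√k) for all j ≥ 1, where F_n(x) is the n-th Fibonacci polynomial defined by F_1(x)=1, F_2(x)=x, F_{n+1}(x)=x F_n(x)+F_{n-1}(x). -/
/-- Fibonacci polynomials as real functions: `F 1 = 1`, `F 2 x = x`,
`F (n+1) x = x * F n x + F (n-1) x` (and `F 0 = 0`). -/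
def fibP : ℕ → ℝ → ℝ
  | 0, _ => 0
  | 1, _ => 1
  | n + 2, x => x * fibP (n + 1) x + fibP n x

theorem B_eq_fibonacci_poly
    (k : ℝ) (hk : 0 < k) (B C : ℕ → ℝ)
    (hB1 : B 1 = k + 1) (hC1 : C 1 = k + 2)
    (hB : ∀ j : ℕ, 2 ≤ j → B j = B (j - 1) + k * C (j - 1))
    (hC : ∀ j : ℕ, 2 ≤ j → C j = B (j - 1) + (k + 1) * C (j - 1)) :
    ∀ j : ℕ, 1 ≤ j → B j = fibP (2 * j + 1) (Real.sqrt k) := by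
  set x := Real.sqrt k with hx
  have hx0 : 0 < x := Real.sqrt_pos.mpr hk
  have hxx : x * x = k := Real.mul_self_sqrt hk.le
  have key : ∀ j : ℕ, 1 ≤ j →
      B j = fibP (2 * j + 1) x ∧ C j = fibP (2 * j + 1) x + fibP (2 * j) x / x := by
    intro j hj
    induction j, hj using Nat.le_induction with
    | base =>
      constructor
      · show B 1 = fibP 3 x
        simp [fibP, hB1]; nlinarith
      · show C 1 = fibP 3 x + fibP 2 x / x
        simp only [fibP]
        rw [hC1]
        field_simp
        linear_combination (-x) * hxx
    | succ n hn ih =>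
      obtain ⟨ihB, ihC⟩ := ih
      have h2 : 2 ≤ n + 1 := by omega
      have hBn := hB (n + 1) h2
      have hCn := hC (n + 1) h2
      simp only [Nat.add_sub_cancel] at hBn hCn
      have e1 : 2 * (n + 1) + 1 = (2 * n + 1) + 2 := by ring
      have e2 : 2 * (n + 1) = 2 * n + 2 := by ring
      have f1 : fibP ((2 * n + 1) + 2) x = x * fibP (2 * n + 2) x + fibP (2 * n + 1) x := by
        simp [fibP]
      have f2 : fibP (2 * n + 2) x = x * fibP (2 * n + 1) x + fibP (2 * n) x := rfl
      rw [e1, e2, f1, f2]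
      constructor
      · rw [hBn, ihB, ihC]
        field_simp
        linear_combination (-(x * fibP (2 * n + 1) x) - fibP (2 * n) x) * hxx
      · rw [hCn, ihB, ihC]
        field_simp
        linear_combination (-(x * fibP (2 * n + 1) x) - fibP (2 * n) x) * hxx
  intro j hj
  exact (key j hj).1
end

section
/- For any j ≥ 1 with constant k, the sequence A_j (as in the generalized recurrence with all k_j = k) satisfies the three-term recurrence A_j = (k+2) A_{j-1} - A_{j-2} for j ≥ 3. -/
theorem A_three_term_recurrence
    (k : ℝ) (hk : 0 < k) (A B C : ℕ → ℝ)
    (hA1 : A 1 = k ^ 2 + 3 * k + 1)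
    (hA2 : A 2 = k ^ 3 + 5 * k ^ 2 + 6 * k + 1)
    (hB1 : B 1 = k + 1) (hC1 : C 1 = k + 2)
    (hB : ∀ j : ℕ, 2 ≤ j → B j = B (j - 1) + k * C (j - 1))
    (hC : ∀ j : ℕ, 2 ≤ j → C j = B (j - 1) + (k + 1) * C (j - 1))
    (hA : ∀ j : ℕ, 2 ≤ j → A j * C (j - 1) = A (j - 1) * C j - 1) :
    ∀ j : ℕ, 3 ≤ j → A j = (k + 2) * A (j - 1) - A (j - 2) := by
  -- positivity of B and C
  have pos : ∀ j : ℕ, 1 ≤ j → 0 < B j ∧ 0 < C j := by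
    intro j hj
    induction j, hj using Nat.le_induction with
    | base => constructor <;> [rw [hB1]; rw [hC1]] <;> linarith
    | succ n hn ih =>
      have h2 : 2 ≤ n + 1 := by omega
      have hBn := hB (n + 1) h2
      have hCn := hC (n + 1) h2
      simp only [Nat.add_sub_cancel] at hBn hCn
      constructor
      · rw [hBn]; nlinarith [ih.1, ih.2]
      · rw [hCn]; nlinarith [ih.1, ih.2]
  intro j hj
  obtain ⟨m, rfl⟩ : ∃ m, j = m + 3 := ⟨j - 3, by omega⟩
  have e1 := hA (m + 3) (by omega)
  have e2 := hA (m + 2) (by omega)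
  have c3 := hC (m + 3) (by omega)
  have c2 := hC (m + 2) (by omega)
  have b2 := hB (m + 2) (by omega)
  simp only [show m + 3 - 1 = m + 2 from rfl, show m + 2 - 1 = m + 1 from rfl,
    show m + 3 - 2 = m + 1 from rfl] at e1 e2 c3 c2 b2 ⊢
  have hC2pos : 0 < C (m + 2) := (pos (m + 2) (by omega)).2
  have c3' : C (m + 3) = (k + 2) * C (m + 2) - C (m + 1) := by
    rw [c3, b2, c2]; ring
  have key : (A (m + 3) - ((k + 2) * A (m + 2) - A (m + 1))) * C (m + 2) = 0 := by
    linear_combination e1 - e2 + A (m + 2) * c3'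
  rcases mul_eq_zero.mp key with h | h
  · linarith
  · linarith
end

section
/- For fixed c > 0, the finite-P harmonic-oscillator partition function Z_P = (F_{2P+1}(c/P) + F_{2P−1}(c/P) − 2)^{−1/2} converges as P → ∞ to 1/(e^{c/2} − e^{−c/2}) = (1/2) csch(c/2). -/
open Filter Real
open Topology

lemma fibP_binet (x : ℝ) (hx : 0 < x) (n : ℕ) :
    fibP n x = (((x + Real.sqrt (x^2+4))/2)^n - ((x - Real.sqrt (x^2+4))/2)^n)
      / Real.sqrt (x^2+4) := by
  set s := Real.sqrt (x^2+4) with hs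
  have hs2 : s^2 = x^2+4 := Real.sq_sqrt (by positivity)
  have hs0 : 0 < s := Real.sqrt_pos.2 (by positivity)
  set p := (x+s)/2 with hp
  set q := (x-s)/2 with hq
  have hp2 : p^2 = x*p + 1 := by rw [hp]; nlinarith [hs2]
  have hq2 : q^2 = x*q + 1 := by rw [hq]; nlinarith [hs2]
  induction n using Nat.twoStepInduction with
  | zero => simp [fibP]
  | one =>
    show (1:ℝ) = (p^1 - q^1)/s
    rw [hp, hq]
    field_simp
    ring
  | more n ih1 ih2 =>
    show x * fibP (n+1) x + fibP n x = _
    rw [ih1, ih2]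
    field_simp
    linear_combination (1/4)*(q^n - p^n) * hs2

lemma fibP_key (x : ℝ) (hx : 0 < x) (k : ℕ) :
    fibP (2*k+3) x + fibP (2*k+1) x - 2
      = ((Real.exp (Real.arsinh (x/2)))^(k+1)
          - ((Real.exp (Real.arsinh (x/2)))^(k+1))⁻¹)^2 := by
  set s := Real.sqrt (x^2+4) with hs
  have hs2 : s^2 = x^2+4 := Real.sq_sqrt (by positivity)
  have hs0 : 0 < s := Real.sqrt_pos.2 (by positivity)
  set p := (x+s)/2 with hp
  have hp0 : 0 < p := by positivity
  have hpe : Real.exp (Real.arsinh (x/2)) = p := by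
    rw [Real.exp_arsinh,
      show (1+(x/2)^2 : ℝ) = (s/2)^2 by nlinarith [hs2],
      Real.sqrt_sq (by positivity : (0:ℝ) ≤ s/2), hp]
    ring
  have hq : (x - s)/2 = -p⁻¹ := by
    have hmul : p * ((x-s)/2) = -1 := by rw [hp]; nlinarith [hs2]
    field_simp
    linarith [hmul]
  have hs' : s = p + p⁻¹ := by
    have : p⁻¹ = -((x-s)/2) := by rw [hq]; ring
    rw [this, hp]; ring
  rw [hpe, fibP_binet x hx (2*k+3), fibP_binet x hx (2*k+1), ← hs, ← hp, hq,
    Odd.neg_pow ⟨k+1, by ring⟩ p⁻¹, Odd.neg_pow ⟨k, by ring⟩ p⁻¹, hs']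
  have hpp : p + p⁻¹ ≠ 0 := by positivity
  have hu : p * p⁻¹ = 1 := mul_inv_cancel₀ hp0.ne'
  have h1 : p^(k+1) * p⁻¹^(k+1) = 1 := by rw [← mul_pow, hu, one_pow]
  rw [← inv_pow, ← add_div, sub_eq_iff_eq_add, div_eq_iff hpp]
  generalize p⁻¹ = u at hu h1 ⊢
  linear_combination (-(p^(2*k+1)+u^(2*k+1))) * hu + 2*(p+u) * h1

theorem finite_P_partition_function_limit (c : ℝ) (hc : 0 < c) :
    Tendsto
      (fun P : ℕ =>
        (fibP (2 * P + 1) (c / (P : ℝ)) + fibP (2 * P - 1) (c / (P : ℝ)) - 2)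
          ^ (-(1 / 2) : ℝ))
      atTop (nhds (1 / (Real.exp (c / 2) - Real.exp (-c / 2)))) := by
  set g : ℕ → ℝ := fun P => (P : ℝ) * Real.arsinh (c / (2 * P)) with hgdef
  have hmain : ∀ P : ℕ, 1 ≤ P →
      (fibP (2 * P + 1) (c / (P : ℝ)) + fibP (2 * P - 1) (c / (P : ℝ)) - 2)
          ^ (-(1 / 2) : ℝ)
        = 1 / (Real.exp (g P) - Real.exp (-(g P))) := by
    intro P hP
    obtain ⟨k, rfl⟩ := Nat.exists_eq_add_of_le hP
    have hP0 : (0:ℝ) < (1 + k : ℕ) := by positivity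
    have hx : 0 < c / ((1 + k : ℕ) : ℝ) := div_pos hc hP0
    have hidx1 : 2 * (1 + k) + 1 = 2 * k + 3 := by omega
    have hidx2 : 2 * (1 + k) - 1 = 2 * k + 1 := by omega
    rw [hidx1, hidx2, fibP_key _ hx k]
    have hx2 : c / ((1 + k : ℕ) : ℝ) / 2 = c / (2 * ((1 + k : ℕ) : ℝ)) := by
      ring
    rw [hx2]
    set a := Real.arsinh (c / (2 * ((1 + k : ℕ) : ℝ))) with ha
    have ha0 : 0 < a := Real.arsinh_pos_iff.2 (by positivity)
    have ht : Real.exp a ^ (k + 1) = Real.exp (g (1 + k)) := by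
      rw [hgdef]
      show Real.exp a ^ (k + 1) = Real.exp (((1 + k : ℕ) : ℝ) * a)
      rw [← Real.exp_nat_mul]
      congr 1
      push_cast
      ring
    have hg0 : 0 < g (1 + k) := by
      rw [hgdef]
      have : (0:ℝ) < ((1 + k : ℕ) : ℝ) := hP0
      positivity
    rw [ht, ← Real.exp_neg]
    have hd : 0 < Real.exp (g (1 + k)) - Real.exp (-(g (1 + k))) := by
      have := Real.exp_lt_exp.2 (show -(g (1 + k)) < g (1 + k) by linarith)
      linarith
    rw [Real.rpow_neg (sq_nonneg _), ← Real.sqrt_eq_rpow,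
      Real.sqrt_sq hd.le, one_div]
  have hy : Tendsto (fun P : ℕ => c / (2 * (P : ℝ))) atTop (𝓝[≠] (0:ℝ)) := by
    rw [tendsto_nhdsWithin_iff]
    constructor
    · have h := tendsto_const_div_atTop_nhds_zero_nat (c / 2)
      refine h.congr fun P => ?_
      rw [div_div]
    · filter_upwards [eventually_ge_atTop 1] with P hP
      have : (0:ℝ) < (P:ℝ) := by exact_mod_cast hP
      simp only [Set.mem_compl_iff, Set.mem_singleton_iff]
      positivity
  have hslope : Tendsto (fun y : ℝ => Real.arsinh y / y) (𝓝[≠] (0:ℝ)) (𝓝 1) := by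
    have h := Real.hasDerivAt_arsinh 0
    simp only [ne_eq, OfNat.ofNat_ne_zero, not_false_eq_true, zero_pow, add_zero,
      Real.sqrt_one, inv_one] at h
    have h2 := hasDerivAt_iff_tendsto_slope.mp h
    refine h2.congr fun y => ?_
    simp [slope_def_field, Real.arsinh_zero]
  have hg : Tendsto g atTop (𝓝 (c / 2)) := by
    have h1 : Tendsto (fun P : ℕ =>
        (c / 2) * (Real.arsinh (c / (2 * (P : ℝ))) / (c / (2 * (P : ℝ)))))
        atTop (𝓝 ((c / 2) * 1)) := (hslope.comp hy).const_mul (c / 2)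
    rw [mul_one] at h1
    refine h1.congr' ?_
    filter_upwards [eventually_ge_atTop 1] with P hP
    have hP0 : (0:ℝ) < (P:ℝ) := by exact_mod_cast hP
    rw [hgdef]
    field_simp
  have hd : Tendsto (fun P : ℕ => Real.exp (g P) - Real.exp (-(g P))) atTop
      (𝓝 (Real.exp (c / 2) - Real.exp (-(c / 2)))) :=
    ((Real.continuous_exp.tendsto _).comp hg).sub
      ((Real.continuous_exp.tendsto _).comp hg.neg)
  have hne : Real.exp (c / 2) - Real.exp (-(c / 2)) ≠ 0 := by
    have := Real.exp_lt_exp.2 (show -(c/2) < c/2 by linarith)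
    linarith
  have hfin := (tendsto_const_nhds (x := (1:ℝ))).div hd hne
  have : -c / 2 = -(c / 2) := by ring
  rw [this]
  refine Tendsto.congr' ?_ hfin
  filter_upwards [eventually_ge_atTop 1] with P hP
  exact (hmain P hP).symm
end
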